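/- Let d be a squarefree positive integer and let a₁, a₂, b be integers with gcd(a₁, a₂, b) = 1. Set A₁ = a₁³ + 3d·a₁·a₂² − 3a₁·b², A₂ = 3a₁²·a₂ + d·a₂³ − 3a₂·b², and B = b³. Then the greatest common divisor G = gcd(A₁, A₂, B) divides 8d. -/

import Mathlib

set_option maxRecDepth 40000 in
set_option maxHeartbeats 3000000 in
private lemma zmod16_lemma : ∀ b d a1 a2 : ZMod 16, b^3 = 0 → 8*d ≠ 0 →
    (8*a1 ≠ 0 ∨ 8*a2 ≠ 0) → a1^3+3*d*a1*a2^2-3*a1*b^2 = 0 →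
    3*a1^2*a2+d*a2^3-3*a2*b^2 = 0 → False := by decide

private lemma zmod4_lemma : ∀ b d a1 a2 : ZMod 4, b^3 = 0 → d = 2 →
    (2*a1 ≠ 0 ∨ 2*a2 ≠ 0) → a1^3+3*d*a1*a2^2-3*a1*b^2 = 0 →
    3*a1^2*a2+d*a2^3-3*a2*b^2 = 0 → False := by decide

private lemma zmod16_mul8 (x : ℤ) : (8 : ZMod 16) * (x : ZMod 16) = 0 ↔ (2:ℤ) ∣ x := by
  have h : (8 : ZMod 16) * (x : ZMod 16) = ((8 * x : ℤ) : ZMod 16) := by push_cast; ring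
  rw [h, ZMod.intCast_zmod_eq_zero_iff_dvd]
  omega

private lemma zmod4_mul2 (x : ℤ) : (2 : ZMod 4) * (x : ZMod 4) = 0 ↔ (2:ℤ) ∣ x := by
  have h : (2 : ZMod 4) * (x : ZMod 4) = ((2 * x : ℤ) : ZMod 4) := by push_cast; ring
  rw [h, ZMod.intCast_zmod_eq_zero_iff_dvd]
  omega

private lemma odd_prime_dvd (p : ℕ) (hp : p.Prime) (hp2 : p ≠ 2) (d : ℕ) (a₁ a₂ b : ℤ)
    (hco : ¬((p:ℤ) ∣ a₁ ∧ (p:ℤ) ∣ a₂)) (hb : (p:ℤ) ∣ b)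
    (h1 : (p:ℤ) ∣ a₁ ^ 3 + 3 * (d : ℤ) * a₁ * a₂ ^ 2 - 3 * a₁ * b ^ 2)
    (h2 : (p:ℤ) ∣ 3 * a₁ ^ 2 * a₂ + (d : ℤ) * a₂ ^ 3 - 3 * a₂ * b ^ 2) :
    (p:ℤ) ∣ (d:ℤ) := by
  have hpZ : Prime (p:ℤ) := Nat.prime_iff_prime_int.mp hp
  have hb2 : (p:ℤ) ∣ b^2 := dvd_pow hb two_ne_zero
  by_cases hpa1 : (p:ℤ) ∣ a₁
  · have hpa2 : ¬ (p:ℤ) ∣ a₂ := fun h' => hco ⟨hpa1, h'⟩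
    have hda : (p:ℤ) ∣ (d:ℤ) * a₂^3 := by
      have h3 := dvd_add (dvd_sub h2 (hpa1.mul_left (3*a₁*a₂))) (hb2.mul_left (3*a₂))
      have e : 3 * a₁ ^ 2 * a₂ + (d : ℤ) * a₂ ^ 3 - 3 * a₂ * b ^ 2 - 3*a₁*a₂*a₁ + 3*a₂*b^2
          = (d:ℤ) * a₂^3 := by ring
      rwa [e] at h3
    rcases hpZ.dvd_mul.mp hda with h | h
    · exact h
    · exact absurd (hpZ.dvd_of_dvd_pow h) hpa2
  · have h1' : (p:ℤ) ∣ a₁ * (a₁^2 + 3*(d:ℤ)*a₂^2 - 3*b^2) := by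
      have e : a₁ * (a₁^2 + 3*(d:ℤ)*a₂^2 - 3*b^2)
          = a₁ ^ 3 + 3 * (d : ℤ) * a₁ * a₂ ^ 2 - 3 * a₁ * b ^ 2 := by ring
      rwa [e]
    have hinner : (p:ℤ) ∣ a₁^2 + 3*(d:ℤ)*a₂^2 - 3*b^2 := (hpZ.dvd_mul.mp h1').resolve_left hpa1
    by_cases hpa2 : (p:ℤ) ∣ a₂
    · exfalso
      have ha2sq : (p:ℤ) ∣ a₂^2 := dvd_pow hpa2 two_ne_zero
      have h3 := dvd_add (dvd_sub hinner (ha2sq.mul_left (3*(d:ℤ)))) (hb2.mul_left 3)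
      have e : a₁^2 + 3*(d:ℤ)*a₂^2 - 3*b^2 - 3*(d:ℤ)*a₂^2 + 3*b^2 = a₁^2 := by ring
      rw [e] at h3
      exact hpa1 (hpZ.dvd_of_dvd_pow h3)
    · have hkey : (p:ℤ) ∣ 8*(d:ℤ)*a₁*a₂^3 := by
        have h3 := dvd_add (dvd_sub (h1.mul_left (3*a₂)) (h2.mul_left a₁)) (hb2.mul_left (6*a₁*a₂))
        have e : 3*a₂*(a₁ ^ 3 + 3 * (d : ℤ) * a₁ * a₂ ^ 2 - 3 * a₁ * b ^ 2)
            - a₁*(3 * a₁ ^ 2 * a₂ + (d : ℤ) * a₂ ^ 3 - 3 * a₂ * b ^ 2)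
            + 6*a₁*a₂*b^2 = 8*(d:ℤ)*a₁*a₂^3 := by ring
        rwa [e] at h3
      rcases hpZ.dvd_mul.mp hkey with h | h
      · rcases hpZ.dvd_mul.mp h with h' | h'
        · rcases hpZ.dvd_mul.mp h' with h'' | h''
          · exfalso
            have h8 : (p:ℤ) ∣ (2:ℤ)^3 := by norm_num; exact_mod_cast h''
            have := hpZ.dvd_of_dvd_pow h8
            have hp2' : p ∣ 2 := by exact_mod_cast this
            exact hp2 ((Nat.prime_dvd_prime_iff_eq hp Nat.prime_two).mp hp2')
          · exact h''
        · exact absurd h' hpa1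
      · exact absurd (hpZ.dvd_of_dvd_pow h) hpa2

private lemma odd_prime_sq (p : ℕ) (hp : p.Prime) (hp2 : p ≠ 2) (d : ℕ) (a₁ a₂ b : ℤ)
    (hco : ¬((p:ℤ) ∣ a₁ ∧ (p:ℤ) ∣ a₂))
    (h1 : (p:ℤ)^2 ∣ a₁ ^ 3 + 3 * (d : ℤ) * a₁ * a₂ ^ 2 - 3 * a₁ * b ^ 2)
    (h2 : (p:ℤ)^2 ∣ 3 * a₁ ^ 2 * a₂ + (d : ℤ) * a₂ ^ 3 - 3 * a₂ * b ^ 2)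
    (h3 : (p:ℤ)^2 ∣ b^3) :
    (p:ℤ) * (p:ℤ) ∣ (d:ℤ) := by
  have hpZ : Prime (p:ℤ) := Nat.prime_iff_prime_int.mp hp
  have hp0 : (p:ℤ) ∣ (p:ℤ)^2 := dvd_pow_self _ two_ne_zero
  have hb : (p:ℤ) ∣ b := hpZ.dvd_of_dvd_pow (hp0.trans h3)
  have hd : (p:ℤ) ∣ (d:ℤ) :=
    odd_prime_dvd p hp hp2 d a₁ a₂ b hco hb (hp0.trans h1) (hp0.trans h2)
  have hb2 : (p:ℤ) ∣ b^2 := dvd_pow hb two_ne_zero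
  have ha1 : (p:ℤ) ∣ a₁ := by
    apply hpZ.dvd_of_dvd_pow (n := 3)
    have h4 := dvd_add (dvd_sub (hp0.trans h1) (hd.mul_left (3*a₁*a₂^2))) (hb2.mul_left (3*a₁))
    have e : a₁ ^ 3 + 3 * (d : ℤ) * a₁ * a₂ ^ 2 - 3 * a₁ * b ^ 2 - 3*a₁*a₂^2*(d:ℤ)
        + 3*a₁*b^2 = a₁^3 := by ring
    rwa [e] at h4
  have ha2 : ¬ (p:ℤ) ∣ a₂ := fun h' => hco ⟨ha1, h'⟩
  have hsqb : (p:ℤ)^2 ∣ b^2 := pow_dvd_pow_of_dvd hb 2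
  have hsqa : (p:ℤ)^2 ∣ a₁^2 := pow_dvd_pow_of_dvd ha1 2
  have hdsq : (p:ℤ)^2 ∣ (d:ℤ) * a₂^3 := by
    have h4 := dvd_add (dvd_sub h2 (hsqa.mul_left (3*a₂))) (hsqb.mul_left (3*a₂))
    have e : 3 * a₁ ^ 2 * a₂ + (d : ℤ) * a₂ ^ 3 - 3 * a₂ * b ^ 2 - 3*a₂*a₁^2 + 3*a₂*b^2
        = (d:ℤ) * a₂^3 := by ring
    rwa [e] at h4
  obtain ⟨e, he⟩ := hd
  rw [he] at hdsq ⊢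
  have hpne : (p:ℤ) ≠ 0 := by exact_mod_cast hp.ne_zero
  have h5 : (p:ℤ) ∣ e * a₂^3 := by
    rw [pow_two] at hdsq
    have e2 : (p:ℤ) * e * a₂^3 = (p:ℤ) * (e * a₂^3) := by ring
    rw [e2] at hdsq
    exact (mul_dvd_mul_iff_left hpne).mp hdsq
  rcases hpZ.dvd_mul.mp h5 with h | h
  · exact mul_dvd_mul_left _ h
  · exact absurd (hpZ.dvd_of_dvd_pow h) ha2

/-- With `A₁ = a₁³ + 3d·a₁·a₂² - 3a₁b²`, `A₂ = 3a₁²a₂ + d·a₂³ - 3a₂b²`, `B = b³`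
arising from expanding `f((a₁ + a₂√d)/b)` with `f(x) = x³ - 3x`, if `gcd(a₁, a₂, b) = 1`
and `d` is a squarefree positive integer, then `G = gcd(A₁, A₂, B)` divides `8d`. -/
theorem gcd_dvd_eight_mul_d
    (d : ℕ) (hd : 0 < d) (hsf : Squarefree d)
    (a₁ a₂ b : ℤ) (h : Int.gcd (Int.gcd a₁ a₂) b = 1) :
    (Int.gcd
        (Int.gcd (a₁ ^ 3 + 3 * (d : ℤ) * a₁ * a₂ ^ 2 - 3 * a₁ * b ^ 2)
          (3 * a₁ ^ 2 * a₂ + (d : ℤ) * a₂ ^ 3 - 3 * a₂ * b ^ 2))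
        (b ^ 3) : ℤ) ∣ 8 * (d : ℤ) := by
  set g : ℕ := Int.gcd
      (Int.gcd (a₁ ^ 3 + 3 * (d : ℤ) * a₁ * a₂ ^ 2 - 3 * a₁ * b ^ 2)
        (3 * a₁ ^ 2 * a₂ + (d : ℤ) * a₂ ^ 3 - 3 * a₂ * b ^ 2))
      (b ^ 3) with hgdef
  have hgA1 : (g:ℤ) ∣ a₁ ^ 3 + 3 * (d : ℤ) * a₁ * a₂ ^ 2 - 3 * a₁ * b ^ 2 :=
    (Int.gcd_dvd_left _ _).trans (Int.gcd_dvd_left _ _)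
  have hgA2 : (g:ℤ) ∣ 3 * a₁ ^ 2 * a₂ + (d : ℤ) * a₂ ^ 3 - 3 * a₂ * b ^ 2 :=
    (Int.gcd_dvd_left _ _).trans (Int.gcd_dvd_right _ _)
  have hgb : (g:ℤ) ∣ b ^ 3 := Int.gcd_dvd_right _ _
  -- g ≠ 0
  have hg0 : g ≠ 0 := by
    intro h0
    rw [hgdef] at h0
    obtain ⟨hA, hb3⟩ := Int.gcd_eq_zero_iff.mp h0
    have hb0 : b = 0 := by
      exact pow_eq_zero_iff (three_ne_zero) |>.mp hb3
    have hA0 : Int.gcd (a₁ ^ 3 + 3 * (d : ℤ) * a₁ * a₂ ^ 2 - 3 * a₁ * b ^ 2)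
        (3 * a₁ ^ 2 * a₂ + (d : ℤ) * a₂ ^ 3 - 3 * a₂ * b ^ 2) = 0 := by exact_mod_cast hA
    obtain ⟨h1, h2⟩ := Int.gcd_eq_zero_iff.mp hA0
    subst hb0
    have hd0 : (0:ℤ) < (d:ℤ) := by exact_mod_cast hd
    have h1' : a₁ * (a₁^2 + 3*(d:ℤ)*a₂^2) = 0 := by linear_combination h1
    have h2' : a₂ * (3*a₁^2 + (d:ℤ)*a₂^2) = 0 := by linear_combination h2
    have ha1 : a₁ = 0 := by
      rcases mul_eq_zero.mp h1' with hh | hh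
      · exact hh
      · have : a₁^2 = 0 := by nlinarith [sq_nonneg a₁, sq_nonneg a₂]
        exact pow_eq_zero_iff two_ne_zero |>.mp this
    have ha2 : a₂ = 0 := by
      rcases mul_eq_zero.mp h2' with hh | hh
      · exact hh
      · have : a₂^2 = 0 := by nlinarith [sq_nonneg a₁, sq_nonneg a₂]
        exact pow_eq_zero_iff two_ne_zero |>.mp this
    rw [ha1, ha2] at h
    simp [Int.gcd_zero_right] at h
  -- reduce to factorization
  have h8d : (8 * d : ℕ) ≠ 0 := by omega
  rw [show (8 * (d:ℤ)) = ((8*d : ℕ) : ℤ) by push_cast; ring, Int.natCast_dvd_natCast,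
    ← Nat.factorization_le_iff_dvd hg0 h8d]
  rw [Finsupp.le_def]
  intro p
  by_cases hp : p.Prime
  swap
  · simp [Nat.factorization_eq_zero_of_not_prime _ hp]
  rw [← Nat.Prime.pow_dvd_iff_le_factorization hp h8d]
  have hpe : p ^ g.factorization p ∣ g := Nat.ordProj_dvd g p
  set e := g.factorization p with hedef
  rcases Nat.eq_zero_or_pos e with he0 | he0
  · simp [he0]
  have hp1 : p ∣ g := (dvd_pow_self p he0.ne').trans hpe
  have hpZ : Prime (p:ℤ) := Nat.prime_iff_prime_int.mp hp
  have hpgz : (p:ℤ) ∣ (g:ℤ) := Int.natCast_dvd_natCast.mpr hp1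
  have hpb : (p:ℤ) ∣ b := hpZ.dvd_of_dvd_pow (hpgz.trans hgb)
  have hpA1 := hpgz.trans hgA1
  have hpA2 := hpgz.trans hgA2
  have hco : ¬((p:ℤ) ∣ a₁ ∧ (p:ℤ) ∣ a₂) := by
    rintro ⟨x1, x2⟩
    have hh1 : (p:ℤ) ∣ (Int.gcd a₁ a₂ : ℤ) := Int.dvd_coe_gcd x1 x2
    have hh2 : (p:ℤ) ∣ (Int.gcd (Int.gcd a₁ a₂) b : ℤ) := Int.dvd_coe_gcd hh1 hpb
    rw [h] at hh2
    have : p ∣ 1 := by exact_mod_cast hh2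
    exact hp.ne_one (Nat.dvd_one.mp this)
  by_cases hp2 : p = 2
  · subst hp2
    by_cases hd2 : 2 ∣ d
    · -- d even: show e ≤ 1 using mod-4 argument
      have he : e ≤ 1 := by
        by_contra hle
        have h4 : 4 ∣ g := by
          have := (pow_dvd_pow 2 (by omega : 2 ≤ e)).trans hpe
          norm_num at this
          exact this
        have c : ((4:ℕ):ℤ) ∣ (g:ℤ) := Int.natCast_dvd_natCast.mpr h4
        have eb : ((b:ℤ) : ZMod 4)^3 = 0 := by
          have : (((b^3 : ℤ)) : ZMod 4) = 0 :=
            (ZMod.intCast_zmod_eq_zero_iff_dvd _ 4).mpr (by exact_mod_cast c.trans hgb)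
          push_cast at this
          exact this
        have eA1 : ((a₁:ℤ) : ZMod 4)^3 + 3*((d:ℕ) : ZMod 4)*((a₁:ℤ) : ZMod 4)*((a₂:ℤ) : ZMod 4)^2
            - 3*((a₁:ℤ) : ZMod 4)*((b:ℤ) : ZMod 4)^2 = 0 := by
          have : (((a₁ ^ 3 + 3 * (d : ℤ) * a₁ * a₂ ^ 2 - 3 * a₁ * b ^ 2 : ℤ)) : ZMod 4) = 0 :=
            (ZMod.intCast_zmod_eq_zero_iff_dvd _ 4).mpr (by exact_mod_cast c.trans hgA1)
          push_cast at this
          linear_combination this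
        have eA2 : 3*((a₁:ℤ) : ZMod 4)^2*((a₂:ℤ) : ZMod 4) + ((d:ℕ) : ZMod 4)*((a₂:ℤ) : ZMod 4)^3
            - 3*((a₂:ℤ) : ZMod 4)*((b:ℤ) : ZMod 4)^2 = 0 := by
          have : (((3 * a₁ ^ 2 * a₂ + (d : ℤ) * a₂ ^ 3 - 3 * a₂ * b ^ 2 : ℤ)) : ZMod 4) = 0 :=
            (ZMod.intCast_zmod_eq_zero_iff_dvd _ 4).mpr (by exact_mod_cast c.trans hgA2)
          push_cast at this
          linear_combination this
        have hnd4 : ¬ 4 ∣ d := by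
          intro h4d
          exact Nat.prime_two.not_isUnit (hsf 2 (by omega))
        have ed4 : ((d:ℕ) : ZMod 4) = 2 := by
          obtain ⟨k, rfl⟩ : ∃ k, d = 4*k+2 := ⟨(d-2)/4, by omega⟩
          push_cast
          rw [show ((4:ZMod 4)) = 0 by decide]
          ring
        have epar : (2:ZMod 4)*((a₁:ℤ) : ZMod 4) ≠ 0 ∨ (2:ZMod 4)*((a₂:ℤ) : ZMod 4) ≠ 0 := by
          by_contra hcon
          push_neg at hcon
          exact hco ⟨(zmod4_mul2 a₁).mp hcon.1, (zmod4_mul2 a₂).mp hcon.2⟩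
        exact zmod4_lemma _ _ _ _ eb ed4 epar eA1 eA2
      calc (2:ℕ)^e ∣ 2^1 := pow_dvd_pow 2 he
        _ ∣ 8 * d := ⟨4*d, by ring⟩
    · -- d odd: show e ≤ 3 using mod-16 argument
      have he : e ≤ 3 := by
        by_contra hle
        have h16 : 16 ∣ g := by
          have := (pow_dvd_pow 2 (by omega : 4 ≤ e)).trans hpe
          norm_num at this
          exact this
        have c : ((16:ℕ):ℤ) ∣ (g:ℤ) := Int.natCast_dvd_natCast.mpr h16
        have eb : ((b:ℤ) : ZMod 16)^3 = 0 := by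
          have : (((b^3 : ℤ)) : ZMod 16) = 0 :=
            (ZMod.intCast_zmod_eq_zero_iff_dvd _ 16).mpr (by exact_mod_cast c.trans hgb)
          push_cast at this
          exact this
        have eA1 : ((a₁:ℤ) : ZMod 16)^3 + 3*((d:ℕ) : ZMod 16)*((a₁:ℤ) : ZMod 16)*((a₂:ℤ) : ZMod 16)^2
            - 3*((a₁:ℤ) : ZMod 16)*((b:ℤ) : ZMod 16)^2 = 0 := by
          have : (((a₁ ^ 3 + 3 * (d : ℤ) * a₁ * a₂ ^ 2 - 3 * a₁ * b ^ 2 : ℤ)) : ZMod 16) = 0 :=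
            (ZMod.intCast_zmod_eq_zero_iff_dvd _ 16).mpr (by exact_mod_cast c.trans hgA1)
          push_cast at this
          linear_combination this
        have eA2 : 3*((a₁:ℤ) : ZMod 16)^2*((a₂:ℤ) : ZMod 16) + ((d:ℕ) : ZMod 16)*((a₂:ℤ) : ZMod 16)^3
            - 3*((a₂:ℤ) : ZMod 16)*((b:ℤ) : ZMod 16)^2 = 0 := by
          have : (((3 * a₁ ^ 2 * a₂ + (d : ℤ) * a₂ ^ 3 - 3 * a₂ * b ^ 2 : ℤ)) : ZMod 16) = 0 :=
            (ZMod.intCast_zmod_eq_zero_iff_dvd _ 16).mpr (by exact_mod_cast c.trans hgA2)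
          push_cast at this
          linear_combination this
        have ed : (8:ZMod 16)*((d:ℕ) : ZMod 16) ≠ 0 := by
          intro h0
          apply hd2
          have h0' : (8:ZMod 16) * (((d:ℤ)) : ZMod 16) = 0 := by push_cast; exact h0
          exact_mod_cast (zmod16_mul8 (d:ℤ)).mp h0'
        have epar : (8:ZMod 16)*((a₁:ℤ) : ZMod 16) ≠ 0 ∨ (8:ZMod 16)*((a₂:ℤ) : ZMod 16) ≠ 0 := by
          by_contra hcon
          push_neg at hcon
          exact hco ⟨(zmod16_mul8 a₁).mp hcon.1, (zmod16_mul8 a₂).mp hcon.2⟩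
        exact zmod16_lemma _ _ _ _ eb ed epar eA1 eA2
      calc (2:ℕ)^e ∣ 2^3 := pow_dvd_pow 2 he
        _ ∣ 8 * d := ⟨d, by ring⟩
  · -- odd prime
    have hpd : (p:ℤ) ∣ (d:ℤ) := odd_prime_dvd p hp hp2 d a₁ a₂ b hco hpb hpA1 hpA2
    have hpdn : p ∣ d := Int.natCast_dvd_natCast.mp hpd
    have he : e ≤ 1 := by
      by_contra hle
      have hsq : p^2 ∣ g := (pow_dvd_pow p (by omega : 2 ≤ e)).trans hpe
      have c : (p:ℤ)^2 ∣ (g:ℤ) := by exact_mod_cast Int.natCast_dvd_natCast.mpr hsq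
      have hpp := odd_prime_sq p hp hp2 d a₁ a₂ b hco (c.trans hgA1) (c.trans hgA2) (c.trans hgb)
      have hsf' : Squarefree (d:ℤ) := Int.squarefree_natCast.mpr hsf
      exact hpZ.not_isUnit (hsf' _ hpp)
    calc p^e ∣ p^1 := pow_dvd_pow p he
      _ ∣ 8 * d := by simpa using Dvd.dvd.mul_left hpdn 8
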